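/- With the dihedral coordinates u_{13}, u_{14}, u_{24}, u_{25}, u_{35} defined as cross ratios of the Plücker coordinates of the parametrized 2×5 matrix, all five relations hold: u_{13} + u_{24}u_{25} = 1, u_{24} + u_{13}u_{35} = 1, u_{35} + u_{14}u_{24} = 1, u_{14} + u_{25}u_{35} = 1, u_{25} + u_{13}u_{14} = 1. -/

import Mathlib

/-- The 2×5 matrix with rows `(1,1,1,1,0)` and `(0,1,1+x,1+x+y,1)`. -/
def Mmat (x y : ℝ) : Matrix (Fin 2) (Fin 5) ℝ :=
  !![1, 1, 1, 1, 0; 0, 1, 1 + x, 1 + x + y, 1]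

/-- The 2×2 minor (Plücker coordinate) of `Mmat x y` on columns `i, j`. -/
def pmin (x y : ℝ) (i j : Fin 5) : ℝ :=
  Mmat x y 0 i * Mmat x y 1 j - Mmat x y 0 j * Mmat x y 1 i

/-- The dihedral coordinate `u_{ij} = [i,i+1 | j+1,j]`, a cross ratio of Plücker
coordinates, with indices taken cyclically modulo 5 (0-indexed). -/
noncomputable def u (x y : ℝ) (i j : Fin 5) : ℝ :=
  (pmin x y i (j + 1) * pmin x y (i + 1) j) / (pmin x y i j * pmin x y (i + 1) (j + 1))

/-- All five binary geometry relations for the dihedral coordinates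
`u₁₃, u₂₄, u₃₅, u₁₄, u₂₅` (here `u₁₃ = u x y 0 2`, `u₂₄ = u x y 1 3`,
`u₃₅ = u x y 2 4`, `u₁₄ = u x y 0 3`, `u₂₅ = u x y 1 4`). -/
theorem binary_relations (x y : ℝ) (hx : x ≠ 0) (hy : y ≠ 0)
    (h1x : 1 + x ≠ 0) (hxy : x + y ≠ 0) (h1xy : 1 + x + y ≠ 0) :
    u x y 0 2 + u x y 1 3 * u x y 1 4 = 1 ∧
    u x y 1 3 + u x y 0 2 * u x y 2 4 = 1 ∧
    u x y 2 4 + u x y 0 3 * u x y 1 3 = 1 ∧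
    u x y 0 3 + u x y 1 4 * u x y 2 4 = 1 ∧
    u x y 1 4 + u x y 0 2 * u x y 0 3 = 1 := by
  have p02 : pmin x y 0 2 = 1 + x := by norm_num [pmin, Mmat, Matrix.cons_val_two, Matrix.cons_val_three, Matrix.cons_val_four] <;> ring
  have p03 : pmin x y 0 3 = 1 + x + y := by norm_num [pmin, Mmat, Matrix.cons_val_two, Matrix.cons_val_three, Matrix.cons_val_four] <;> ring
  have p04 : pmin x y 0 4 = 1 := by norm_num [pmin, Mmat, Matrix.cons_val_two, Matrix.cons_val_three, Matrix.cons_val_four] <;> ring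
  have p10 : pmin x y 1 0 = -1 := by norm_num [pmin, Mmat, Matrix.cons_val_two, Matrix.cons_val_three, Matrix.cons_val_four] <;> ring
  have p12 : pmin x y 1 2 = x := by norm_num [pmin, Mmat, Matrix.cons_val_two, Matrix.cons_val_three, Matrix.cons_val_four] <;> ring
  have p13 : pmin x y 1 3 = x + y := by norm_num [pmin, Mmat, Matrix.cons_val_two, Matrix.cons_val_three, Matrix.cons_val_four] <;> ring
  have p14 : pmin x y 1 4 = 1 := by norm_num [pmin, Mmat, Matrix.cons_val_two, Matrix.cons_val_three, Matrix.cons_val_four] <;> ring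
  have p20 : pmin x y 2 0 = -(1 + x) := by norm_num [pmin, Mmat, Matrix.cons_val_two, Matrix.cons_val_three, Matrix.cons_val_four] <;> ring
  have p23 : pmin x y 2 3 = y := by norm_num [pmin, Mmat, Matrix.cons_val_two, Matrix.cons_val_three, Matrix.cons_val_four] <;> ring
  have p24 : pmin x y 2 4 = 1 := by norm_num [pmin, Mmat, Matrix.cons_val_two, Matrix.cons_val_three, Matrix.cons_val_four] <;> ring
  have p30 : pmin x y 3 0 = -(1 + x + y) := by norm_num [pmin, Mmat, Matrix.cons_val_two, Matrix.cons_val_three, Matrix.cons_val_four] <;> ring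
  have p34 : pmin x y 3 4 = 1 := by norm_num [pmin, Mmat, Matrix.cons_val_two, Matrix.cons_val_three, Matrix.cons_val_four] <;> ring
  have h02 : u x y 0 2 = (1 + x + y) * x / ((1 + x) * (x + y)) := by
    show pmin x y 0 3 * pmin x y 1 2 / (pmin x y 0 2 * pmin x y 1 3) = _
    rw [p03, p12, p02, p13]
  have h13 : u x y 1 3 = y / (x + y) := by
    show pmin x y 1 4 * pmin x y 2 3 / (pmin x y 1 3 * pmin x y 2 4) = _
    rw [p14, p23, p13, p24]; ring
  have h24 : u x y 2 4 = (1 + x) / (1 + x + y) := by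
    show pmin x y 2 0 * pmin x y 3 4 / (pmin x y 2 4 * pmin x y 3 0) = _
    rw [p20, p34, p24, p30,
      div_eq_div_iff (by intro h; apply h1xy; linarith) h1xy]; ring
  have h03 : u x y 0 3 = (x + y) / (1 + x + y) := by
    show pmin x y 0 4 * pmin x y 1 3 / (pmin x y 0 3 * pmin x y 1 4) = _
    rw [p04, p13, p03, p14]; ring
  have h14 : u x y 1 4 = 1 / (1 + x) := by
    show pmin x y 1 0 * pmin x y 2 4 / (pmin x y 1 4 * pmin x y 2 0) = _
    rw [p10, p24, p14, p20,
      div_eq_div_iff (by intro h; apply h1x; linarith) h1x]; ring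
  rw [h02, h13, h24, h03, h14]
  refine ⟨?_, ?_, ?_, ?_, ?_⟩ <;> field_simp <;> ring
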